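/- For every positive integer t, the number of 4×4 matrices with nonnegative integer entries, all of whose row sums and column sums equal t and whose (1,3), (1,4) and (2,4) entries equal 0, is 1 + (157/60)t + (949/360)t² + (4/3)t³ + (13/36)t⁴ + (1/20)t⁵ + (1/360)t⁶. (This is the Ehrhart polynomial of the Chan–Robbins–Yuen polytope CRY_4.) -/
import Mathlib


open Finset

private def T1 (n : ℕ) : ℕ := ∑ j ∈ range n, (j + 1)
private def T2 (n : ℕ) : ℕ := ∑ j ∈ range n, T1 (j + 1)

private lemma T1_cast (n : ℕ) : (T1 n : ℚ) = n * (n + 1) / 2 := by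
  induction n with
  | zero => simp [T1]
  | succ k ih =>
    rw [T1, Finset.sum_range_succ, ← T1] at *
    push_cast [ih]; ring

private lemma T2_cast (n : ℕ) : (T2 n : ℚ) = n * (n + 1) * (n + 2) / 6 := by
  induction n with
  | zero => simp [T2]
  | succ k ih =>
    rw [T2, Finset.sum_range_succ, ← T2]
    push_cast [ih, T1_cast]; ring

private lemma innerSum (T : ℚ) (n : ℕ) :
    ∑ j ∈ range n, (T + 1 - (j : ℚ)) * (((j : ℚ) + 1) * ((j : ℚ) + 2) * ((j : ℚ) + 3) / 6) =
      9/20 * n + 5/8 * n^2 + 1/12 * n^3 - 1/8 * n^4 - 1/30 * n^5 +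
        T * (1/4 * n + 11/24 * n^2 + 1/4 * n^3 + 1/24 * n^4) := by
  induction n with
  | zero => simp
  | succ k ih =>
    rw [Finset.sum_range_succ, ih]
    push_cast; ring

private lemma inner2 (t c : ℕ) (hc : c ≤ t) :
    ∑ j ∈ range (c + 1), ((t + 1 - j : ℕ) : ℚ) * (T2 (j + 1) : ℚ) =
      1 + 77/60 * c - 5/24 * c^2 - 3/4 * c^3 - 7/24 * c^4 - 1/30 * c^5 +
        (t : ℚ) * (1 + 25/12 * c + 35/24 * c^2 + 5/12 * c^3 + 1/24 * c^4) := by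
  have h1 : ∀ j ∈ range (c + 1),
      ((t + 1 - j : ℕ) : ℚ) * (T2 (j + 1) : ℚ) =
        ((t : ℚ) + 1 - (j : ℚ)) * (((j : ℚ) + 1) * ((j : ℚ) + 2) * ((j : ℚ) + 3) / 6) := by
    intro j hj
    have hj' : j < c + 1 := Finset.mem_range.mp hj
    have hle : j ≤ t + 1 := by omega
    rw [Nat.cast_sub hle, T2_cast]
    push_cast; ring
  rw [Finset.sum_congr rfl h1, innerSum]
  push_cast; ring

private lemma outerSum (T : ℚ) (n : ℕ) :
    ∑ c ∈ range n,
      (1 + 77/60 * (c:ℚ) - 5/24 * (c:ℚ)^2 - 3/4 * (c:ℚ)^3 - 7/24 * (c:ℚ)^4 - 1/30 * (c:ℚ)^5 +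
        T * (1 + 25/12 * (c:ℚ) + 35/24 * (c:ℚ)^2 + 5/12 * (c:ℚ)^3 + 1/24 * (c:ℚ)^4)) =
      1/3 * n + 101/180 * n^2 + 5/24 * n^3 - 1/18 * n^4 - 1/24 * n^5 - 1/180 * n^6 +
        T * (1/5 * n + 5/12 * n^2 + 7/24 * n^3 + 1/12 * n^4 + 1/120 * n^5) := by
  induction n with
  | zero => simp
  | succ k ih =>
    rw [Finset.sum_range_succ, ih]
    push_cast; ring

private def mk4 (t a c d e f g : ℕ) : Matrix (Fin 4) (Fin 4) ℕ :=
  !![a, t - a, 0, 0;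
     c, d, t - (c + d), 0;
     e, f, g, t - (e + f + g);
     t - (a + c + e), a - (d + f), c + d - g, e + f + g]

private def Box (t : ℕ) : Finset (ℕ × ℕ × ℕ × ℕ × ℕ × ℕ) :=
  (range (t+1) ×ˢ range (t+1) ×ˢ range (t+1) ×ˢ range (t+1) ×ˢ range (t+1) ×ˢ range (t+1)).filter
    (fun x => (x.2.2.2.2.1 ≤ x.1 + x.2.1 ∧ x.2.2.1 + x.2.2.2.1 + x.2.2.2.2.1 ≤ t) ∧
      (x.2.1 + x.2.2.2.1 ≤ x.2.2.2.2.2 ∧ x.2.2.2.2.2 + x.1 + x.2.2.1 ≤ t))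

private def Cond (t : ℕ) (M : Matrix (Fin 4) (Fin 4) ℕ) : Prop :=
  (∀ i, ∑ j, M i j = t) ∧ (∀ j, ∑ i, M i j = t) ∧ M 0 2 = 0 ∧ M 0 3 = 0 ∧ M 1 3 = 0

private lemma toTuple_mem {t : ℕ} {M : Matrix (Fin 4) (Fin 4) ℕ} (hM : Cond t M) :
    (M 1 0, M 1 1, M 2 0, M 2 1, M 2 2, M 0 0) ∈ Box t := by
  obtain ⟨hr, hc, h02, h03, h13⟩ := hM
  have r0 := hr 0; have r1 := hr 1; have r2 := hr 2; have r3 := hr 3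
  have c0 := hc 0; have c1 := hc 1; have c2 := hc 2; have c3 := hc 3
  simp only [Fin.sum_univ_four] at r0 r1 r2 r3 c0 c1 c2 c3
  simp only [Box, mem_filter, mem_product, mem_range]
  omega

private lemma mk4_cond {t c d e f g a : ℕ} (hx : (c, d, e, f, g, a) ∈ Box t) :
    Cond t (mk4 t a c d e f g) := by
  simp only [Box, mem_filter, mem_product, mem_range] at hx
  refine ⟨?_, ?_, ?_, ?_, ?_⟩
  · intro i
    fin_cases i <;>
      simp [mk4, Fin.sum_univ_four, Matrix.cons_val_two, Matrix.cons_val_three] <;> omega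
  · intro j
    fin_cases j <;>
      simp [mk4, Fin.sum_univ_four, Matrix.cons_val_two, Matrix.cons_val_three] <;> omega
  · simp [mk4]
  · simp [mk4]
  · simp [mk4, Matrix.cons_val_two, Matrix.cons_val_three]

private lemma mk4_left {t : ℕ} {M : Matrix (Fin 4) (Fin 4) ℕ} (hM : Cond t M) :
    mk4 t (M 0 0) (M 1 0) (M 1 1) (M 2 0) (M 2 1) (M 2 2) = M := by
  obtain ⟨hr, hc, h02, h03, h13⟩ := hM
  have r0 := hr 0; have r1 := hr 1; have r2 := hr 2; have r3 := hr 3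
  have c0 := hc 0; have c1 := hc 1; have c2 := hc 2; have c3 := hc 3
  simp only [Fin.sum_univ_four] at r0 r1 r2 r3 c0 c1 c2 c3
  ext i j
  fin_cases i <;> fin_cases j <;>
    simp [mk4, Matrix.cons_val_two, Matrix.cons_val_three] <;> omega

private lemma card_eq (t : ℕ) :
    Nat.card {M : Matrix (Fin 4) (Fin 4) ℕ //
        (∀ i, ∑ j, M i j = t) ∧ (∀ j, ∑ i, M i j = t) ∧
          M 0 2 = 0 ∧ M 0 3 = 0 ∧ M 1 3 = 0} = (Box t).card := by
  rw [← Nat.card_eq_finsetCard]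
  exact Nat.card_congr
    { toFun := fun M => ⟨(M.1 1 0, M.1 1 1, M.1 2 0, M.1 2 1, M.1 2 2, M.1 0 0), toTuple_mem M.2⟩
      invFun := fun x =>
        ⟨mk4 t x.1.2.2.2.2.2 x.1.1 x.1.2.1 x.1.2.2.1 x.1.2.2.2.1 x.1.2.2.2.2.1,
          mk4_cond x.2⟩
      left_inv := fun M => Subtype.ext (mk4_left M.2)
      right_inv := fun x => Subtype.ext (by
        obtain ⟨⟨c, d, e, f, g, a⟩, hx⟩ := x
        simp [mk4, Matrix.cons_val_two, Matrix.cons_val_three]) }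

private lemma sumF (F : ℕ → ℕ) (hF0 : F 0 = 0) (n m : ℕ) (h : m ≤ n) :
    ∑ e ∈ range n, F (m - e) = ∑ j ∈ range m, F (j + 1) := by
  have h1 : ∑ e ∈ range m, F (m - e) = ∑ e ∈ range n, F (m - e) :=
    Finset.sum_subset (Finset.range_subset_range.2 h) (by
      intro x _ hx
      have hm : m ≤ x := by simpa using hx
      rw [Nat.sub_eq_zero_of_le hm, hF0])
  rw [← h1, ← Finset.sum_range_reflect (fun j => F (m - j)) m]
  exact Finset.sum_congr rfl fun j hj => by
    have : j < m := Finset.mem_range.mp hj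
    congr 1; omega

private lemma sumF2 (F G : ℕ → ℕ) (hF0 : F 0 = 0) (n m : ℕ) (h : m ≤ n) :
    ∑ d ∈ range n, G d * F (m - d) = ∑ j ∈ range m, G (m - 1 - j) * F (j + 1) := by
  have h1 : ∑ d ∈ range m, G d * F (m - d) = ∑ d ∈ range n, G d * F (m - d) :=
    Finset.sum_subset (Finset.range_subset_range.2 h) (by
      intro x _ hx
      have hm : m ≤ x := by simpa using hx
      rw [Nat.sub_eq_zero_of_le hm, hF0, mul_zero])
  rw [← h1, ← Finset.sum_range_reflect (fun j => G j * F (m - j)) m]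
  exact Finset.sum_congr rfl fun j hj => by
    have : j < m := Finset.mem_range.mp hj
    congr 2; omega

private lemma countA (t k j : ℕ) :
    (∑ a ∈ range (t + 1), if k ≤ a ∧ a + j ≤ t then 1 else 0) = t + 1 - j - k := by
  rw [← Finset.card_filter]
  rcases le_or_gt j t with h | h
  · have he : (range (t + 1)).filter (fun a => k ≤ a ∧ a + j ≤ t) = Icc k (t - j) := by
      ext a; simp only [mem_filter, mem_range, mem_Icc]; omega
    rw [he, Nat.card_Icc]; omega
  · have he : (range (t + 1)).filter (fun a => k ≤ a ∧ a + j ≤ t) = ∅ := by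
      ext a; simp only [mem_filter, mem_range, notMem_empty, iff_false]; omega
    rw [he]; simp; omega

private lemma countG (t s u : ℕ) :
    (∑ g ∈ range (t + 1), if g ≤ s ∧ g + u ≤ t then 1 else 0) * (t + 1 - (s + u)) =
      (s + 1) * (t + 1 - (s + u)) := by
  rcases le_or_gt (s + u) t with h | h
  · congr 1
    rw [← Finset.card_filter]
    have he : (range (t + 1)).filter (fun g => g ≤ s ∧ g + u ≤ t) = range (s + 1) := by
      ext a; simp only [mem_filter, mem_range]; omega
    rw [he, card_range]
  · have hz : t + 1 - (s + u) = 0 := by omega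
    simp [hz]

private lemma box_card (t : ℕ) :
    (Box t).card = ∑ c ∈ range (t + 1), ∑ j ∈ range (c + 1), (t + 1 - j) * T2 (j + 1) := by
  rw [Box, Finset.card_filter]
  simp only [Finset.sum_product]
  calc
    (∑ c ∈ range (t+1), ∑ d ∈ range (t+1), ∑ e ∈ range (t+1), ∑ f ∈ range (t+1),
        ∑ g ∈ range (t+1), ∑ a ∈ range (t+1),
          if (g ≤ c + d ∧ e + f + g ≤ t) ∧ (d + f ≤ a ∧ a + c + e ≤ t) then 1 else 0)
      = ∑ c ∈ range (t+1), ∑ d ∈ range (t+1), ∑ e ∈ range (t+1), ∑ f ∈ range (t+1),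
          (c + d + 1) * (t + 1 - (c + d + (e + f))) := by
        refine Finset.sum_congr rfl fun c _ => Finset.sum_congr rfl fun d _ =>
          Finset.sum_congr rfl fun e _ => Finset.sum_congr rfl fun f _ => ?_
        have h1 : ∀ g ∈ range (t+1),
            (∑ a ∈ range (t + 1), if (g ≤ c + d ∧ e + f + g ≤ t) ∧ (d + f ≤ a ∧ a + c + e ≤ t)
              then 1 else 0) =
            (if g ≤ c + d ∧ g + (e + f) ≤ t then 1 else 0) * (t + 1 - (c + e) - (d + f)) := by
          intro g _
          by_cases hP : g ≤ c + d ∧ e + f + g ≤ t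
          · rw [if_pos (by omega)]
            rw [one_mul, ← countA t (d + f) (c + e)]
            refine Finset.sum_congr rfl fun a _ =>
              if_congr (by constructor <;> (intro hh; constructor <;> omega)) rfl rfl
          · rw [if_neg (by omega)]
            rw [zero_mul]
            refine Finset.sum_eq_zero fun a _ => if_neg (by omega)
        rw [Finset.sum_congr rfl h1, ← Finset.sum_mul]
        have h2 : t + 1 - (c + e) - (d + f) = t + 1 - (c + d + (e + f)) := by omega
        rw [h2, countG t (c + d) (e + f)]
    _ = ∑ c ∈ range (t+1), ∑ d ∈ range (t+1),
          (c + d + 1) * T2 (t + 1 - (c + d)) := by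
        refine Finset.sum_congr rfl fun c _ => Finset.sum_congr rfl fun d _ => ?_
        have h3 : ∀ e ∈ range (t+1), (∑ f ∈ range (t+1),
            (c + d + 1) * (t + 1 - (c + d + (e + f)))) =
            (c + d + 1) * T1 (t + 1 - (c + d + e)) := by
          intro e _
          rw [← Finset.mul_sum]
          congr 1
          have h4 : ∀ f ∈ range (t+1), t + 1 - (c + d + (e + f)) = (t + 1 - (c + d + e)) - f :=
            fun f _ => by omega
          rw [Finset.sum_congr rfl h4, sumF (fun x => x) rfl (t+1) _ (by omega), T1]
        rw [Finset.sum_congr rfl h3, ← Finset.mul_sum]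
        congr 1
        have h5 : ∀ e ∈ range (t+1), T1 (t + 1 - (c + d + e)) = T1 ((t + 1 - (c + d)) - e) :=
          fun e _ => by congr 1; omega
        rw [Finset.sum_congr rfl h5, sumF T1 (by simp [T1]) (t+1) _ (by omega), T2]
    _ = ∑ c ∈ range (t+1), ∑ j ∈ range (t + 1 - c), (t + 1 - j) * T2 (j + 1) := by
        refine Finset.sum_congr rfl fun c hc => ?_
        have hc' : c ≤ t := by simpa using Nat.lt_succ_iff.mp (mem_range.mp hc)
        have h6 : ∀ d ∈ range (t+1), (c + d + 1) * T2 (t + 1 - (c + d)) =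
            (fun d => c + d + 1) d * T2 ((t + 1 - c) - d) := fun d _ => by
          simp only; congr 2; omega
        rw [Finset.sum_congr rfl h6,
          sumF2 T2 (fun d => c + d + 1) (by simp [T2]) (t+1) _ (by omega)]
        refine Finset.sum_congr rfl fun j hj => ?_
        have hj' : j < t + 1 - c := mem_range.mp hj
        congr 2
        omega
    _ = ∑ c ∈ range (t+1), ∑ j ∈ range (c + 1), (t + 1 - j) * T2 (j + 1) := by
        rw [sumF (fun m => ∑ j ∈ range m, (t + 1 - j) * T2 (j + 1)) (by simp) (t+1) (t+1) le_rfl]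

theorem stmt19 (t : ℕ) (ht : 0 < t) :
    (Nat.card {M : Matrix (Fin 4) (Fin 4) ℕ //
        (∀ i, ∑ j, M i j = t) ∧ (∀ j, ∑ i, M i j = t) ∧
          M 0 2 = 0 ∧ M 0 3 = 0 ∧ M 1 3 = 0} : ℚ) =
      1 + 157 / 60 * t + 949 / 360 * t ^ 2 + 4 / 3 * t ^ 3 + 13 / 36 * t ^ 4 +
        1 / 20 * t ^ 5 + 1 / 360 * t ^ 6 := by
  rw [card_eq, box_card]
  rw [Nat.cast_sum]
  have hcast : ∀ c ∈ range (t + 1),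
      ((∑ j ∈ range (c + 1), (t + 1 - j) * T2 (j + 1) : ℕ) : ℚ) =
        ∑ j ∈ range (c + 1), ((t + 1 - j : ℕ) : ℚ) * (T2 (j + 1) : ℚ) := by
    intro c _
    rw [Nat.cast_sum]
    exact Finset.sum_congr rfl fun j _ => by push_cast; ring
  rw [Finset.sum_congr rfl hcast]
  rw [Finset.sum_congr rfl (fun c hc => inner2 t c (by
    have := Finset.mem_range.mp hc; omega))]
  rw [outerSum]
  push_cast
  ring
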